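/- Let S be an additive subgroup of ℝ^n such that 2⟨s, s′⟩ ∈ ℤ for all s, s′ ∈ S (where ⟨·,·⟩ is the standard inner product), and let T, T* ⊆ S be subgroups such that ‖t‖² is an even integer for every t ∈ T and every t ∈ T*. Then for every m ∈ T* and t₁, t₂, t₃ ∈ T with t₁ + t₂ + t₃ ∈ 2S, the vector x = (m + t₁, m + t₂, m + t₃) ∈ (ℝ^n)³ has squared Euclidean norm ‖x‖² = ‖m+t₁‖² + ‖m+t₂‖² + ‖m+t₃‖² equal to an even integer. -/

import Mathlib

/-- Evenness in Turyn's construction: if `2⟨s,s'⟩ ∈ ℤ` on `S` and `T, T* ⊆ S` are even, then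
any `(m+t₁, m+t₂, m+t₃)` with `m ∈ T*`, `tᵢ ∈ T`, `t₁+t₂+t₃ ∈ 2S` has even integer
squared norm. -/
theorem stmt_8 {n : ℕ}
    (S T Tstar : AddSubgroup (EuclideanSpace ℝ (Fin n)))
    (hTS : T ≤ S) (hTstarS : Tstar ≤ S)
    (hint : ∀ s ∈ S, ∀ s' ∈ S, ∃ z : ℤ, 2 * (inner ℝ s s' : ℝ) = (z : ℝ))
    (hTeven : ∀ t ∈ T, ∃ z : ℤ, Even z ∧ ‖t‖ ^ 2 = (z : ℝ))
    (hTstareven : ∀ t ∈ Tstar, ∃ z : ℤ, Even z ∧ ‖t‖ ^ 2 = (z : ℝ))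
    (m : EuclideanSpace ℝ (Fin n)) (hm : m ∈ Tstar)
    (t₁ t₂ t₃ : EuclideanSpace ℝ (Fin n))
    (ht₁ : t₁ ∈ T) (ht₂ : t₂ ∈ T) (ht₃ : t₃ ∈ T)
    (hsum : ∃ s ∈ S, t₁ + t₂ + t₃ = s + s) :
    ∃ z : ℤ, Even z ∧
      ‖m + t₁‖ ^ 2 + ‖m + t₂‖ ^ 2 + ‖m + t₃‖ ^ 2 = (z : ℝ) := by
  obtain ⟨s, hs, hseq⟩ := hsum
  obtain ⟨a, ha, hA⟩ := hTstareven m hm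
  obtain ⟨b₁, hb₁, hB₁⟩ := hTeven t₁ ht₁
  obtain ⟨b₂, hb₂, hB₂⟩ := hTeven t₂ ht₂
  obtain ⟨b₃, hb₃, hB₃⟩ := hTeven t₃ ht₃
  obtain ⟨zs, hzs⟩ := hint m (hTstarS hm) s hs
  refine ⟨3 * a + 2 * zs + b₁ + b₂ + b₃, ?_, ?_⟩
  · rcases ha with ⟨a', rfl⟩
    rcases hb₁ with ⟨c₁, rfl⟩
    rcases hb₂ with ⟨c₂, rfl⟩
    rcases hb₃ with ⟨c₃, rfl⟩
    exact ⟨3*a' + zs + c₁ + c₂ + c₃, by ring⟩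
  · have h1 := norm_add_sq_real m t₁
    have h2 := norm_add_sq_real m t₂
    have h3 := norm_add_sq_real m t₃
    have hin : (inner ℝ m t₁ : ℝ) + inner ℝ m t₂ + inner ℝ m t₃ = 2 * (inner ℝ m s : ℝ) := by
      rw [← inner_add_right, ← inner_add_right, hseq, inner_add_right]; ring
    push_cast
    linarith
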